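/- Any two nontrivial cycles of a permutation σ ∈ T_{p,q}(r,s) contain the same number of 1-steps and the same number of q-steps; that is, if the cycles C_1,...,C_k of σ have r_i 1-steps and s_i q-steps, then r_1 = r_2 = ... = r_k and s_1 = s_2 = ... = s_k. -/

import Mathlib

open Finset

set_option linter.unusedSectionVars false

namespace StepAux

variable {p : ℕ} [NeZero p]

lemma natCast_inj_of_lt {a b : ℕ} (ha : a < p) (hb : b < p) (h : (a : ZMod p) = b) : a = b := by
  have := congrArg ZMod.val h
  rwa [ZMod.val_natCast_of_lt ha, ZMod.val_natCast_of_lt hb] at this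

lemma cast_val_eq (x : ZMod p) : ((x.val : ℕ) : ZMod p) = x := ZMod.natCast_rightInverse x

variable (σ : Equiv.Perm (ZMod p)) (q : ℕ)

/-- The set of q-step points. -/
def Bq : Finset (ZMod p) := univ.filter fun j => σ j = j + (q : ZMod p)

lemma mem_Bq {z : ZMod p} : z ∈ Bq σ q ↔ σ z = z + (q : ZMod p) := by simp [Bq]

def TTex (z : ZMod p) : ∃ t, p ≤ t ∨ σ (z - ((t+1 : ℕ) : ZMod p)) ≠ z - (t : ℕ) :=
  ⟨p, Or.inl le_rfl⟩

/-- Length of the backward 1-run ending at `z`. -/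
noncomputable def TT (z : ZMod p) : ℕ := Nat.find (TTex σ z)

variable {σ q}
variable (hq2 : 1 < q) (hqp : q < p) (hq1 : (q : ZMod p) ≠ 1) (hq0 : (q : ZMod p) ≠ 0)
  (h10 : (1 : ZMod p) ≠ 0)
  (hd : ∀ j : ZMod p, σ j = j ∨ σ j - j = 1 ∨ σ j - j = (q : ZMod p))

section TTfacts
variable {z : ZMod p} (hz : σ z = z + (q : ZMod p))

include hqp hq1 hz in
lemma TT_le : TT σ z ≤ p - q := by
  apply Nat.find_le
  right
  have h1 : ((p - q + 1 : ℕ) : ZMod p) = 1 - (q : ZMod p) := by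
    push_cast [Nat.cast_sub hqp.le]
    rw [ZMod.natCast_self]
    ring
  have h2 : ((p - q : ℕ) : ZMod p) = - (q : ZMod p) := by
    push_cast [Nat.cast_sub hqp.le]
    rw [ZMod.natCast_self]
    ring
  rw [h1, h2]
  intro hc
  have : z - (1 - (q:ZMod p)) = z := σ.injective (by rw [hc, hz]; ring_nf)
  apply hq1
  have := sub_eq_self.mp this
  linear_combination -this

include hq2 hqp hq1 hz in
lemma TT_lt : TT σ z < p := lt_of_le_of_lt (TT_le hqp hq1 hz) (by omega)

include hq2 hqp hq1 hz in
lemma TT_spec : σ (z - ((TT σ z + 1 : ℕ) : ZMod p)) ≠ z - ((TT σ z : ℕ) : ZMod p) := by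
  have hs := Nat.find_spec (TTex σ z)
  rcases hs with h | h
  · have := TT_lt hq2 hqp hq1 hz
    change p ≤ TT σ z at h
    omega
  · exact h

lemma run1 {t : ℕ} (ht1 : 1 ≤ t) (ht2 : t ≤ TT σ z) :
    σ (z - (t : ZMod p)) = z - (t : ZMod p) + 1 := by
  have h := Nat.find_min (TTex σ z) (show t - 1 < TT σ z by omega)
  push_neg at h
  have h2 := h.2
  rw [show t - 1 + 1 = t by omega] at h2
  rw [h2, Nat.cast_sub ht1]
  push_cast
  ring

end TTfacts

variable (σ q) in
/-- The previous q-step point along the trajectory through `z`. -/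
noncomputable def prevB (z : ZMod p) : ZMod p := z - ((TT σ z : ℕ) : ZMod p) - ((q : ℕ) : ZMod p)

section prevBfacts
variable {z w : ZMod p} (hz : σ z = z + (q : ZMod p))

include hq2 hqp hq1 hq0 h10 hd hz in
lemma prevB_spec : σ (prevB σ q z) = prevB σ q z + (q : ZMod p) := by
  set T := TT σ z with hT
  have hj : σ (σ.symm (z - (T : ZMod p))) = z - (T : ZMod p) := σ.apply_symm_apply _
  set j := σ.symm (z - (T : ZMod p)) with hjd
  rcases hd j with h | h | h
  · -- j is fixed: impossible since z - T is not fixed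
    exfalso
    rw [h] at hj
    rcases Nat.eq_zero_or_pos T with h0 | h0
    · rw [h0] at hj
      simp at hj
      rw [hj] at h
      rw [h] at hz
      exact hq0 (by linear_combination -hz)
    · have hr := run1 (σ := σ) (z := z) (t := T) h0 le_rfl
      rw [hj] at h
      exact h10 (by linear_combination h - hr)
  · -- j is a 1-step: contradicts TT_spec
    exfalso
    have hj1 : σ j = j + 1 := by linear_combination h
    have : j = z - ((T + 1 : ℕ) : ZMod p) := by
      push_cast
      have : σ j = z - (T : ZMod p) := hj
      rw [hj1] at this
      linear_combination this
    apply TT_spec hq2 hqp hq1 hz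
    rw [← hT, ← this, hj1, this]
    push_cast
    ring
  · -- j is a q-step: j = prevB z
    have hjq : σ j = j + (q : ZMod p) := by linear_combination h
    have : j = prevB σ q z := by
      have : σ j = z - (T : ZMod p) := hj
      rw [hjq] at this
      rw [prevB, ← hT]
      linear_combination this
    rw [← this, hjq]

include hq2 hqp hq1 hq0 h10 hd hz in
lemma prevB_walk : ∀ k, k ≤ TT σ z →
    σ^[k+1] (prevB σ q z) = z - ((TT σ z - k : ℕ) : ZMod p) := by
  intro k
  induction k with
  | zero =>
    intro _
    have h1 : σ (prevB σ q z) = prevB σ q z + (q : ZMod p) :=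
      prevB_spec hq2 hqp hq1 hq0 h10 hd hz
    simp only [zero_add, Function.iterate_one]
    rw [h1, prevB, Nat.sub_zero]
    push_cast
    ring
  | succ k ih =>
    intro hk
    have ih' := ih (by omega)
    rw [Function.iterate_succ_apply', ih']
    have h1 : 1 ≤ TT σ z - k := by omega
    have hr := run1 (σ := σ) (z := z) (t := TT σ z - k) h1 (by omega)
    rw [hr, Nat.cast_sub (by omega : k + 1 ≤ TT σ z), Nat.cast_sub (by omega : k ≤ TT σ z)]
    push_cast
    ring

include hq2 hqp hq1 hz in
lemma not_in_run (hw : σ w = w + (q : ZMod p)) {t : ℕ} (ht1 : 1 ≤ t) (ht2 : t ≤ TT σ z) :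
    w ≠ z - ((t : ℕ) : ZMod p) := by
  intro he
  have hr := run1 (σ := σ) (z := z) ht1 ht2
  rw [← he] at hr
  rw [hw] at hr
  exact hq1 (by linear_combination hr)

include hq2 hqp hq1 hz in
lemma runs_eq (hw : σ w = w + (q : ZMod p)) {t t' : ℕ} (ht : t ≤ TT σ z) (ht' : t' ≤ TT σ w)
    (h : z - ((t : ℕ) : ZMod p) = w - ((t' : ℕ) : ZMod p)) : z = w ∧ t = t' := by
  have key : ∀ (a b : ZMod p) (ha : σ a = a + (q:ZMod p)) (hb : σ b = b + (q:ZMod p))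
      (s s' : ℕ), s ≤ TT σ a → s' ≤ TT σ b → s ≤ s' →
      a - ((s : ℕ) : ZMod p) = b - ((s' : ℕ) : ZMod p) → a = b := by
    intro a b ha hb s s' hs hs' hss he
    have hab : a = b - ((s' - s : ℕ) : ZMod p) := by
      rw [Nat.cast_sub hss]
      linear_combination he
    rcases Nat.eq_zero_or_pos (s' - s) with h0 | h0
    · rw [h0] at hab; simpa using hab
    · exact absurd hab (not_in_run hq2 hqp hq1 hb ha h0 (by omega))
  have hzw : z = w := by
    rcases le_total t t' with hle | hle
    · exact key z w hz hw t t' ht ht' hle h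
    · exact (key w z hw hz t' t ht' ht hle h.symm).symm
  refine ⟨hzw, ?_⟩
  rw [hzw] at h
  have : ((t : ℕ) : ZMod p) = ((t' : ℕ) : ZMod p) := by linear_combination -h
  exact natCast_inj_of_lt (lt_of_le_of_lt ht (TT_lt hq2 hqp hq1 (hzw ▸ hz)))
    (lt_of_le_of_lt ht' (TT_lt hq2 hqp hq1 hw)) this

end prevBfacts

variable (σ q) in
def DDex (z : ZMod p) : ∃ d, p ≤ d ∨ (0 < d ∧ σ (z + ((d : ℕ) : ZMod p)) = z + ((d : ℕ) : ZMod p) + (q : ZMod p)) :=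
  ⟨p, Or.inl le_rfl⟩

variable (σ q) in
noncomputable def DD (z : ZMod p) : ℕ := Nat.find (DDex σ q z)

variable (σ q) in
noncomputable def nextB (z : ZMod p) : ZMod p := z + ((DD σ q z : ℕ) : ZMod p)

section DDfacts
variable {z w z' : ZMod p} (hz : σ z = z + (q : ZMod p))

lemma DD_le : DD σ q z ≤ p := Nat.find_le (Or.inl le_rfl)

lemma DD_pos : 0 < DD σ q z := by
  rcases Nat.eq_zero_or_pos (DD σ q z) with h | h
  · have hs := Nat.find_spec (DDex σ q z)
    change p ≤ DD σ q z ∨ (0 < DD σ q z ∧ _) at hs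
    rcases hs with hs | hs
    · have := NeZero.pos p; omega
    · omega
  · exact h

include hz in
lemma DD_mem : σ (z + ((DD σ q z : ℕ) : ZMod p)) = z + ((DD σ q z : ℕ) : ZMod p) + (q : ZMod p) := by
  have hs := Nat.find_spec (DDex σ q z)
  change p ≤ DD σ q z ∨ (0 < DD σ q z ∧ σ (z + ((DD σ q z : ℕ) : ZMod p)) = z + ((DD σ q z : ℕ) : ZMod p) + (q : ZMod p)) at hs
  rcases hs with hs | hs
  · have heq : DD σ q z = p := le_antisymm DD_le hs
    rw [heq, ZMod.natCast_self, add_zero]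
    exact hz
  · exact hs.2

lemma DD_min {e : ℕ} (he : 0 < e) (he' : e < DD σ q z) :
    σ (z + ((e : ℕ) : ZMod p)) ≠ z + ((e : ℕ) : ZMod p) + (q : ZMod p) := by
  have h := Nat.find_min (DDex σ q z) he'
  push_neg at h
  exact h.2 he

include hz in
lemma nextB_mem : σ (nextB σ q z) = nextB σ q z + (q : ZMod p) := DD_mem hz

include hz in
lemma DD_le_val (hw : σ w = w + (q : ZMod p)) (hne : w ≠ z) : DD σ q z ≤ (w - z).val := by
  apply Nat.find_le
  right
  have hv : ((( w - z).val : ℕ) : ZMod p) = w - z := cast_val_eq _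
  constructor
  · rcases Nat.eq_zero_or_pos (w - z).val with h | h
    · exfalso; apply hne; have := (ZMod.val_eq_zero (w - z)).mp h; linear_combination this
    · exact h
  · rw [hv, show z + (w - z) = w by ring]
    exact hw

include hz in
lemma reach (hw : σ w = w + (q : ZMod p)) : ∃ m, (nextB σ q)^[m] z = w := by
  have main : ∀ v : ℕ, ∀ u : ZMod p, σ u = u + (q : ZMod p) → (w - u).val = v →
      ∃ m, (nextB σ q)^[m] u = w := by
    intro v
    induction v using Nat.strong_induction_on with
    | _ v ih =>
      intro u hu huv
      rcases eq_or_ne u w with he | hne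
      · exact ⟨0, he⟩
      · have hvpos : 0 < v := by
          rcases Nat.eq_zero_or_pos v with h0 | h0
          · exfalso; apply hne
            rw [h0] at huv
            have := (ZMod.val_eq_zero (w - u)).mp huv
            linear_combination -this
          · exact h0
        have hDle : DD σ q u ≤ v := huv ▸ DD_le_val hu hw hne.symm
        have hu' : σ (nextB σ q u) = nextB σ q u + (q : ZMod p) := nextB_mem hu
        have hval : (w - nextB σ q u).val = v - DD σ q u := by
          have h1 : w - nextB σ q u = ((v - DD σ q u : ℕ) : ZMod p) := by
            rw [nextB, Nat.cast_sub hDle]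
            have : ((v : ℕ) : ZMod p) = w - u := huv ▸ cast_val_eq (w - u)
            rw [this]
            ring
          rw [h1, ZMod.val_natCast_of_lt]
          have : v < p := by
            have := ZMod.val_lt (w - u); omega
          omega
        have hlt : v - DD σ q u < v := by
          have := DD_pos (σ := σ) (q := q) (z := u); omega
        obtain ⟨m, hm⟩ := ih _ hlt (nextB σ q u) hu' hval
        exact ⟨m + 1, by rw [Function.iterate_succ_apply, hm]⟩
  exact main (w - z).val z hz rfl

include hz in
lemma nextB_inj (hw : σ w = w + (q : ZMod p)) (h : nextB σ q z = nextB σ q w) : z = w := by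
  have key : ∀ (a b : ZMod p), σ a = a + (q:ZMod p) → σ b = b + (q:ZMod p) →
      DD σ q a ≤ DD σ q b → nextB σ q a = nextB σ q b → a = b := by
    intro a b ha hb hab he
    rcases Nat.eq_zero_or_pos (DD σ q b - DD σ q a) with h0 | h0
    · have : DD σ q a = DD σ q b := by omega
      rw [nextB, nextB, this] at he
      exact add_right_cancel he
    · exfalso
      have hba : a = b + ((DD σ q b - DD σ q a : ℕ) : ZMod p) := by
        rw [Nat.cast_sub hab]
        rw [nextB, nextB] at he
        linear_combination he
      have hDb := DD_pos (σ := σ) (q := q) (z := a)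
      have hlt : DD σ q b - DD σ q a < DD σ q b := by omega
      apply DD_min (σ := σ) (q := q) (z := b) h0 hlt
      rw [← hba]
      exact ha
  rcases le_total (DD σ q z) (DD σ q w) with hle | hle
  · exact key z w hz hw hle h
  · exact (key w z hw hz hle h.symm).symm

include hq2 hqp hq1 hz in
lemma gap_gt_TT (hw : σ w = w + (q : ZMod p)) (hne : w ≠ z) : TT σ z < (z - w).val := by
  by_contra hle
  push_neg at hle
  have hv0 : (z - w).val ≠ 0 := by
    intro h0
    apply hne
    have := (ZMod.val_eq_zero (z - w)).mp h0
    linear_combination -this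
  apply not_in_run hq2 hqp hq1 hz hw (t := (z - w).val) (by omega) hle
  rw [cast_val_eq]
  ring

include hq2 hqp hq1 hz in
lemma prevB_inj (hw : σ w = w + (q : ZMod p)) (h : prevB σ q z = prevB σ q w) : z = w := by
  have h' : z - ((TT σ z : ℕ) : ZMod p) = w - ((TT σ w : ℕ) : ZMod p) := by
    rw [prevB, prevB] at h
    linear_combination h
  exact (runs_eq hq2 hqp hq1 hz hw le_rfl le_rfl h').1

end DDfacts

include hq2 hqp hq1 hq0 h10 hd in
lemma prevB_mapsTo : ∀ z ∈ Bq σ q, prevB σ q z ∈ Bq σ q := by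
  intro z hz
  rw [mem_Bq] at hz ⊢
  exact prevB_spec hq2 hqp hq1 hq0 h10 hd hz

include hq2 hqp hq1 hq0 h10 hd in
lemma prevB_surj : ∀ y ∈ Bq σ q, ∃ w ∈ Bq σ q, prevB σ q w = y := by
  have himg : (Bq σ q).image (prevB σ q) = Bq σ q := by
    apply eq_of_subset_of_card_le
    · intro y hy
      simp only [mem_image] at hy
      obtain ⟨w, hw, hwy⟩ := hy
      exact hwy ▸ prevB_mapsTo hq2 hqp hq1 hq0 h10 hd w hw
    · rw [Finset.card_image_of_injOn]
      intro a ha b hb hab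
      rw [Finset.mem_coe, mem_Bq] at ha hb
      exact prevB_inj hq2 hqp hq1 ha hb hab
  intro y hy
  rw [← himg] at hy
  simp only [mem_image] at hy
  obtain ⟨w, hw, hwy⟩ := hy
  exact ⟨w, hw, hwy⟩

include hq2 hqp hq1 hq0 h10 hd in
lemma comm_lemma {z : ZMod p} (hz : σ z = z + (q : ZMod p)) :
    prevB σ q (nextB σ q z) = nextB σ q (prevB σ q z) := by
  by_cases hzz : nextB σ q z = z
  · have hpzB : prevB σ q z ∈ Bq σ q :=
      prevB_mapsTo hq2 hqp hq1 hq0 h10 hd z ((mem_Bq σ q).mpr hz)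
    have hD0 : ((DD σ q z : ℕ) : ZMod p) = 0 := by
      rw [nextB] at hzz
      linear_combination hzz
    have hDp : DD σ q z = p := by
      have hdvd : p ∣ DD σ q z := (ZMod.natCast_eq_zero_iff _ p).mp hD0
      have h1 : 0 < DD σ q z := DD_pos
      have h2 : DD σ q z ≤ p := DD_le
      have := Nat.le_of_dvd h1 hdvd
      omega
    have huniq : ∀ w : ZMod p, σ w = w + (q : ZMod p) → w = z := by
      intro w hw
      by_contra hne
      have h1 : DD σ q z ≤ (w - z).val := DD_le_val hz hw hne
      have h2 := ZMod.val_lt (w - z)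
      omega
    have h1 : prevB σ q z = z := huniq _ ((mem_Bq σ q).mp hpzB)
    rw [hzz, h1, hzz]
  · have hz'q : σ (nextB σ q z) = nextB σ q z + (q : ZMod p) := nextB_mem hz
    set T := TT σ z with hTdef
    set D := DD σ q z with hDdef
    set z' := nextB σ q z with hz'def
    set T' := TT σ z' with hT'def
    set pz := prevB σ q z with hpzdef
    set pz' := prevB σ q z' with hpz'def
    have hpzq : σ pz = pz + (q : ZMod p) := prevB_spec hq2 hqp hq1 hq0 h10 hd hz
    have hpz'q : σ pz' = pz' + (q : ZMod p) := prevB_spec hq2 hqp hq1 hq0 h10 hd hz'q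
    have hDpos : 0 < D := DD_pos
    have hDle : D ≤ p := DD_le
    have hz'e : z' = z + ((D : ℕ) : ZMod p) := rfl
    have hDlt : D < p := by
      rcases eq_or_lt_of_le hDle with h | h
      · exfalso
        apply hzz
        rw [hz'def, nextB, ← hDdef, h, ZMod.natCast_self, add_zero]
      · exact h
    have hTle : T ≤ p - q := TT_le hqp hq1 hz
    have hT'le : T' ≤ p - q := TT_le hqp hq1 hz'q
    have hT'D : T' < D := by
      have h := gap_gt_TT hq2 hqp hq1 hz'q hz (fun hc => hzz (hc ▸ rfl))
      have h2 : z' - z = ((D : ℕ) : ZMod p) := by rw [hz'e]; ring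
      rwa [h2, ZMod.val_natCast_of_lt hDlt] at h
    have hpzne : pz' ≠ pz := fun h => hzz (prevB_inj hq2 hqp hq1 hz'q hz h)
    set d := (pz' - pz).val with hddef
    have hdpos : 0 < d := by
      rcases Nat.eq_zero_or_pos d with h | h
      · exact absurd (by linear_combination (ZMod.val_eq_zero (pz' - pz)).mp h) hpzne
      · exact h
    have hdlt : d < p := ZMod.val_lt _
    have hpz'e : pz' = pz + ((d : ℕ) : ZMod p) := by
      rw [hddef, cast_val_eq]; ring
    have hpze : pz = z - ((T : ℕ) : ZMod p) - ((q : ℕ) : ZMod p) := rfl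
    have hpz'e2 : pz' = z' - ((T' : ℕ) : ZMod p) - ((q : ℕ) : ZMod p) := rfl
    -- Step B1 : T + D < p
    have hTD : T + D < p := by
      by_contra hc
      push_neg at hc
      have h1 : 1 ≤ p - D := by omega
      have h2 : p - D ≤ T := by omega
      apply not_in_run hq2 hqp hq1 hz hz'q h1 h2
      rw [Nat.cast_sub hDle, ZMod.natCast_self, hz'e]
      ring
    -- Step B2 : d + T' = T + D
    have hdT' : d + T' = T + D := by
      have h1 : ((d + T' : ℕ) : ZMod p) = ((T + D : ℕ) : ZMod p) := by
        push_cast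
        have e1 : z' = z + ((D : ℕ) : ZMod p) := hz'e
        rw [hpz'e] at hpz'e2
        linear_combination hpz'e2 - hpze + e1
      rw [ZMod.natCast_eq_natCast_iff] at h1
      have h2 : (d + T') % p = (T + D) % p := h1
      rcases lt_or_ge (d + T') p with hcase | hcase
      · rwa [Nat.mod_eq_of_lt hcase, Nat.mod_eq_of_lt hTD] at h2
      · exfalso
        rw [Nat.mod_eq_sub_mod hcase, Nat.mod_eq_of_lt (by omega), Nat.mod_eq_of_lt hTD] at h2
        omega
    -- Step beta : nothing of Bq strictly between pz and pz'
    have hbeta : ∀ e : ℕ, 0 < e → e < d → ¬ (σ (pz + ((e : ℕ) : ZMod p)) =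
        pz + ((e : ℕ) : ZMod p) + (q : ZMod p)) := by
      intro e hepos hed hy
      obtain ⟨w, hwB, hwprev⟩ := prevB_surj hq2 hqp hq1 hq0 h10 hd
        (pz + ((e : ℕ) : ZMod p)) ((mem_Bq σ q).mpr hy)
      have hwq : σ w = w + (q : ZMod p) := (mem_Bq σ q).mp hwB
      set Tw := TT σ w with hTwdef
      have hTwle : Tw ≤ p - q := TT_le hqp hq1 hwq
      have hwe : w = pz + ((e : ℕ) : ZMod p) + ((Tw : ℕ) : ZMod p) + ((q : ℕ) : ZMod p) := by
        have : prevB σ q w = w - ((Tw : ℕ) : ZMod p) - ((q : ℕ) : ZMod p) := rfl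
        rw [this] at hwprev
        linear_combination hwprev
      have helt : e < p := by omega
      have hTe : T < e := by
        by_contra hc
        push_neg at hc
        have heq : w - ((Tw : ℕ) : ZMod p) = z - ((T - e : ℕ) : ZMod p) := by
          rw [Nat.cast_sub hc]
          push_cast
          rw [hpze] at hwe
          push_cast at hwe
          linear_combination hwe
        obtain ⟨hwz, -⟩ := runs_eq hq2 hqp hq1 hwq hz le_rfl (by omega : T - e ≤ T) heq
        rw [hwz] at hwprev
        have h0 : ((e : ℕ) : ZMod p) = 0 := by
          rw [← hpzdef] at hwprev
          linear_combination -hwprev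
        have := (ZMod.natCast_eq_zero_iff e p).mp h0
        have := Nat.le_of_dvd hepos this
        omega
      rcases lt_or_ge (e + Tw) p with howp | howp
      · rcases lt_trichotomy (e + Tw) (T + D) with how | how | how
        · -- w strictly between z and z'
          have h1 : 0 < e + Tw - T := by omega
          have h2 : e + Tw - T < D := by omega
          apply DD_min (σ := σ) (q := q) (z := z) h1 h2
          have hwz : z + ((e + Tw - T : ℕ) : ZMod p) = w := by
            rw [Nat.cast_sub (by omega : T ≤ e + Tw)]
            push_cast
            rw [hpze] at hwe
            push_cast at hwe
            linear_combination -hwe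
          rw [hwz]
          exact hwq
        · -- w = z'
          have hcast : ((e : ℕ) : ZMod p) + ((Tw : ℕ) : ZMod p) =
              ((T : ℕ) : ZMod p) + ((D : ℕ) : ZMod p) := by
            have h5 : ((e + Tw : ℕ) : ZMod p) = ((T + D : ℕ) : ZMod p) := by rw [how]
            push_cast at h5
            linear_combination h5
          have hwz' : w = z' := by
            rw [hz'e]
            rw [hpze] at hwe
            linear_combination hwe + hcast
          rw [hwz'] at hwprev
          rw [← hpz'def] at hwprev
          rw [hpz'e] at hwprev
          have : ((d : ℕ) : ZMod p) = ((e : ℕ) : ZMod p) := by linear_combination hwprev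
          have := natCast_inj_of_lt hdlt helt this
          omega
        · -- z' in the run of w
          have h1 : 1 ≤ e + Tw - (T + D) := by omega
          have h2 : e + Tw - (T + D) ≤ Tw := by omega
          apply not_in_run hq2 hqp hq1 hwq hz'q h1 h2
          rw [Nat.cast_sub (by omega : T + D ≤ e + Tw)]
          push_cast
          rw [hpze] at hwe
          push_cast at hwe
          rw [hz'e]
          linear_combination -hwe
      · -- wraparound: z in the run of w
        have h2 : e + Tw - p ≤ Tw := by omega
        have heq : w - ((e + Tw - p : ℕ) : ZMod p) = z - ((T : ℕ) : ZMod p) := by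
          rw [Nat.cast_sub howp]
          push_cast
          rw [ZMod.natCast_self]
          rw [hpze] at hwe
          push_cast at hwe
          linear_combination hwe
        obtain ⟨hwz, -⟩ := runs_eq hq2 hqp hq1 hwq hz h2 le_rfl heq
        rw [hwz] at hwprev
        have h0 : ((e : ℕ) : ZMod p) = 0 := by
          rw [← hpzdef] at hwprev
          linear_combination -hwprev
        have := (ZMod.natCast_eq_zero_iff e p).mp h0
        have := Nat.le_of_dvd hepos this
        omega
    -- conclude DD pz = d
    have hDDle : DD σ q pz ≤ d := by
      apply Nat.find_le
      right
      refine ⟨hdpos, ?_⟩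
      rw [← hpz'e]
      exact hpz'q
    have hDDeq : DD σ q pz = d := by
      rcases lt_or_eq_of_le hDDle with h | h
      · exfalso
        exact hbeta (DD σ q pz) DD_pos h (DD_mem hpzq)
      · exact h
    show pz' = nextB σ q pz
    rw [nextB, hDDeq, ← hpz'e]

include hq2 hqp hq1 hq0 h10 hd in
lemma back_reach : ∀ n : ℕ, ∀ z : ZMod p, σ z = z + (q : ZMod p) →
    σ (σ^[n] z) = σ^[n] z + (q : ZMod p) → ∃ m, (prevB σ q)^[m] (σ^[n] z) = z := by
  intro n
  induction n using Nat.strong_induction_on with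
  | _ n ih =>
    intro z hz hy
    rcases Nat.eq_zero_or_pos n with h0 | h0
    · exact ⟨0, by rw [h0]; rfl⟩
    · set y := σ^[n] z with hydef
      set Ty := TT σ y with hTydef
      have hwalk := prevB_walk hq2 hqp hq1 hq0 h10 hd hy Ty le_rfl
      rw [Nat.sub_self] at hwalk
      simp only [Nat.cast_zero, sub_zero] at hwalk
      -- hwalk : σ^[Ty+1] (prevB σ q y) = y
      rcases le_or_gt (Ty + 1) n with hc | hc
      · -- the previous q-step is still on the forward trajectory from z
        have hkey : prevB σ q y = σ^[n - (Ty + 1)] z := by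
          apply (σ.injective.iterate (Ty + 1))
          rw [hwalk, ← Function.iterate_add_apply]
          rw [show Ty + 1 + (n - (Ty + 1)) = n by omega]
        have hpyq : σ (prevB σ q y) = prevB σ q y + (q : ZMod p) :=
          prevB_spec hq2 hqp hq1 hq0 h10 hd hy
        rw [hkey] at hpyq
        obtain ⟨m, hm⟩ := ih (n - (Ty + 1)) (by omega) z hz hpyq
        exact ⟨m + 1, by rw [Function.iterate_succ_apply, hkey]; exact hm⟩
      · -- z itself lies in the backward 1-run of y : contradiction with z being a q-step
        exfalso
        have hkey : z = σ^[Ty + 1 - n] (prevB σ q y) := by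
          apply (σ.injective.iterate n)
          rw [← Function.iterate_add_apply]
          rw [show n + (Ty + 1 - n) = Ty + 1 by omega]
          rw [hwalk]
        have hwalk2 := prevB_walk hq2 hqp hq1 hq0 h10 hd hy (Ty - n) (by omega)
        rw [show Ty - n + 1 = Ty + 1 - n by omega] at hwalk2
        rw [← hkey] at hwalk2
        -- z = y - (Ty - (Ty - n)) = y - n with 1 ≤ n ≤ Ty
        rw [show Ty - (Ty - n) = n by omega] at hwalk2
        exact not_in_run hq2 hqp hq1 hy hz h0 (by omega) hwalk2

include hq2 hqp hq1 hq0 h10 hd in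
lemma prev_reach {z y : ZMod p} (hz : σ z = z + (q : ZMod p)) (hy : σ y = y + (q : ZMod p))
    (hsc : σ.SameCycle y z) : ∃ m, (prevB σ q)^[m] z = y := by
  obtain ⟨i, -, -, hi⟩ := Equiv.Perm.SameCycle.exists_pow_eq σ hsc
  have hi' : σ^[i] y = z := by rw [Equiv.Perm.iterate_eq_pow]; exact hi
  have := back_reach hq2 hqp hq1 hq0 h10 hd i y hy (by rw [hi']; exact hz)
  rw [hi'] at this
  exact this

include hq2 hqp hq1 hq0 h10 hd in
lemma prevB_sameCycle {z : ZMod p} (hz : σ z = z + (q : ZMod p)) :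
    σ.SameCycle (prevB σ q z) z := by
  have hwalk := prevB_walk hq2 hqp hq1 hq0 h10 hd hz (TT σ z) le_rfl
  rw [Nat.sub_self] at hwalk
  simp only [Nat.cast_zero, sub_zero] at hwalk
  exact ⟨(TT σ z + 1 : ℕ), by rw [zpow_natCast, ← Equiv.Perm.iterate_eq_pow]; exact hwalk⟩

include hq2 hqp hq1 hq0 h10 hd in
lemma prevB_iter_mem {z : ZMod p} (hz : σ z = z + (q : ZMod p)) (m : ℕ) :
    σ ((prevB σ q)^[m] z) = (prevB σ q)^[m] z + (q : ZMod p) ∧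
      σ.SameCycle ((prevB σ q)^[m] z) z := by
  induction m with
  | zero => exact ⟨hz, Equiv.Perm.SameCycle.refl _ _⟩
  | succ m ih =>
    rw [Function.iterate_succ_apply']
    exact ⟨prevB_spec hq2 hqp hq1 hq0 h10 hd ih.1,
      (prevB_sameCycle hq2 hqp hq1 hq0 h10 hd ih.1).trans ih.2⟩

include hq2 hqp hq1 hq0 h10 hd in
lemma nextB_iter_mem {z : ZMod p} (hz : σ z = z + (q : ZMod p)) (m : ℕ) :
    σ ((nextB σ q)^[m] z) = (nextB σ q)^[m] z + (q : ZMod p) := by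
  induction m with
  | zero => exact hz
  | succ m ih =>
    rw [Function.iterate_succ_apply']
    exact nextB_mem ih

include hq2 hqp hq1 hq0 h10 hd in
lemma comm_iter {z : ZMod p} (hz : σ z = z + (q : ZMod p)) (j m : ℕ) :
    (nextB σ q)^[j] ((prevB σ q)^[m] z) = (prevB σ q)^[m] ((nextB σ q)^[j] z) := by
  have one : ∀ w : ZMod p, σ w = w + (q : ZMod p) → ∀ k : ℕ,
      nextB σ q ((prevB σ q)^[k] w) = (prevB σ q)^[k] (nextB σ q w) := by
    intro w hw k
    induction k with
    | zero => rfl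
    | succ k ih =>
      rw [Function.iterate_succ_apply', Function.iterate_succ_apply']
      have hk : σ ((prevB σ q)^[k] w) = (prevB σ q)^[k] w + (q : ZMod p) :=
        (prevB_iter_mem hq2 hqp hq1 hq0 h10 hd hw k).1
      rw [← comm_lemma hq2 hqp hq1 hq0 h10 hd hk, ih]
  induction j with
  | zero => rfl
  | succ j ih =>
    rw [Function.iterate_succ_apply', Function.iterate_succ_apply', ih,
      one _ (nextB_iter_mem hq2 hqp hq1 hq0 h10 hd hz j) m]

include hq2 hqp hq1 hq0 h10 hd in
lemma nextB_iter_injOn {a b : ZMod p} (ha : σ a = a + (q : ZMod p))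
    (hb : σ b = b + (q : ZMod p)) (j : ℕ) (h : (nextB σ q)^[j] a = (nextB σ q)^[j] b) :
    a = b := by
  induction j with
  | zero => exact h
  | succ j ih =>
    rw [Function.iterate_succ_apply', Function.iterate_succ_apply'] at h
    exact ih (nextB_inj (nextB_iter_mem hq2 hqp hq1 hq0 h10 hd ha j)
      (nextB_iter_mem hq2 hqp hq1 hq0 h10 hd hb j) h)

include hq2 hqp hq1 hq0 h10 hd in
/-- The key cardinality comparison: the q-steps on the cycle of `a` are at most as many as
those on the cycle of `b`. -/
lemma card_le_card_sameCycle {a b : ZMod p} (ha : σ a = a + (q : ZMod p))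
    (hb : σ b = b + (q : ZMod p)) :
    ((Bq σ q).filter fun y => σ.SameCycle a y).card ≤
      ((Bq σ q).filter fun y => σ.SameCycle b y).card := by
  obtain ⟨j, hj⟩ := reach ha hb
  apply Finset.card_le_card_of_injOn ((nextB σ q)^[j])
  · intro x hx
    rw [Finset.mem_coe, Finset.mem_filter] at hx ⊢
    obtain ⟨hxB, hxsc⟩ := hx
    have hxq : σ x = x + (q : ZMod p) := (mem_Bq σ q).mp hxB
    obtain ⟨m, hm⟩ := prev_reach hq2 hqp hq1 hq0 h10 hd ha hxq hxsc.symm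
    have hcomm := comm_iter hq2 hqp hq1 hq0 h10 hd ha j m
    rw [hm] at hcomm
    rw [hcomm, hj]
    have hmem := prevB_iter_mem hq2 hqp hq1 hq0 h10 hd hb m
    exact ⟨(mem_Bq σ q).mpr hmem.1, hmem.2.symm⟩
  · intro x hx y hy hxy
    rw [Finset.coe_filter, Set.mem_setOf_eq] at hx hy
    exact nextB_iter_injOn hq2 hqp hq1 hq0 h10 hd ((mem_Bq σ q).mp hx.1)
      ((mem_Bq σ q).mp hy.1) j hxy

include hq2 hqp hq1 hq0 h10 hd in
lemma cycle_cast_sum {C : Equiv.Perm (ZMod p)} (hC : C ∈ σ.cycleFactorsFinset) :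
    ((C.support.filter fun j => σ j - j = 1).card : ZMod p) +
      ((C.support.filter fun j => σ j - j = (q : ZMod p)).card : ZMod p) * (q : ZMod p) = 0 := by
  obtain ⟨hCc, hC2⟩ := Equiv.Perm.mem_cycleFactorsFinset_iff.mp hC
  have hns : ∀ j ∈ C.support, σ j ≠ j := by
    intro j hj
    rw [← hC2 j hj]
    exact Equiv.Perm.mem_support.mp hj
  have himg : C.support.image σ = C.support := by
    apply eq_of_subset_of_card_le
    · intro y hy
      rw [Finset.mem_image] at hy
      obtain ⟨x, hx, rfl⟩ := hy
      rw [← hC2 x hx]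
      exact Equiv.Perm.apply_mem_support.mpr hx
    · rw [Finset.card_image_of_injective _ σ.injective]
  have hsum : ∑ j ∈ C.support, (σ j - j) = 0 := by
    rw [Finset.sum_sub_distrib]
    have : ∑ j ∈ C.support, σ j = ∑ j ∈ C.support, j := by
      conv_rhs => rw [← himg]
      rw [Finset.sum_image (fun x _ y _ h => σ.injective h)]
    rw [this, sub_self]
  have hfilter : C.support.filter (fun j => ¬ (σ j - j = 1)) =
      C.support.filter (fun j => σ j - j = (q : ZMod p)) := by
    ext j
    simp only [Finset.mem_filter]
    constructor
    · rintro ⟨hj, hj1⟩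
      refine ⟨hj, ?_⟩
      rcases hd j with h | h | h
      · exact absurd h (hns j hj)
      · exact absurd h hj1
      · exact h
    · rintro ⟨hj, hjq⟩
      refine ⟨hj, fun h => hq1 ?_⟩
      rw [h] at hjq
      exact hjq.symm
  have hsplit := Finset.sum_filter_add_sum_filter_not C.support
    (fun j => σ j - j = 1) (fun j => σ j - j)
  rw [hsum] at hsplit
  have e1 : ∑ j ∈ C.support.filter (fun j => σ j - j = 1), (σ j - j) =
      ((C.support.filter fun j => σ j - j = 1).card : ZMod p) := by
    rw [Finset.sum_congr rfl (fun j hj => (Finset.mem_filter.mp hj).2)]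
    simp [mul_one]
  have e2 : ∑ j ∈ C.support.filter (fun j => ¬ (σ j - j = 1)), (σ j - j) =
      ((C.support.filter fun j => σ j - j = (q : ZMod p)).card : ZMod p) * (q : ZMod p) := by
    rw [hfilter]
    rw [Finset.sum_congr rfl (fun j hj => (Finset.mem_filter.mp hj).2)]
    simp [mul_comm]
  rw [e1, e2] at hsplit
  exact hsplit

end StepAux

/-- `T_{p,q}(r,s)`: permutations of `{1,…,p}` (modeled as `ZMod p`) with exactly `p-r-s` fixed
points, exactly `r` indices with `σ j - j ≡ 1`, and exactly `s` indices with `σ j - j ≡ q`. -/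
def Tset (p q r s : ℕ) [NeZero p] : Set (Equiv.Perm (ZMod p)) :=
  {σ | (Finset.univ.filter fun j : ZMod p => σ j = j).card = p - r - s ∧
       (Finset.univ.filter fun j : ZMod p => σ j - j = 1).card = r ∧
       (Finset.univ.filter fun j : ZMod p => σ j - j = (q : ZMod p)).card = s}

open StepAux in
/-- Any two nontrivial cycles of a permutation in `T_{p,q}(r,s)` have the same number of
1-steps and the same number of q-steps. -/
theorem cycles_same_step_counts (p q r s : ℕ) [NeZero p] (hq : 1 < q) (hqp : q < p)
    (σ : Equiv.Perm (ZMod p)) (hσ : σ ∈ Tset p q r s)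
    (C₁ C₂ : Equiv.Perm (ZMod p))
    (hC₁ : C₁ ∈ σ.cycleFactorsFinset) (hC₂ : C₂ ∈ σ.cycleFactorsFinset) :
    (C₁.support.filter fun j => C₁ j - j = 1).card =
        (C₂.support.filter fun j => C₂ j - j = 1).card ∧
      (C₁.support.filter fun j => C₁ j - j = (q : ZMod p)).card =
        (C₂.support.filter fun j => C₂ j - j = (q : ZMod p)).card := by
  classical
  by_cases hCeq : C₁ = C₂
  · subst hCeq; exact ⟨rfl, rfl⟩
  have hp3 : 2 < p := by omega
  haveI : Fact (1 < p) := ⟨by omega⟩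
  have h10 : (1 : ZMod p) ≠ 0 := one_ne_zero
  have hq0 : (q : ZMod p) ≠ 0 := by
    intro h
    have := (ZMod.natCast_eq_zero_iff q p).mp h
    have := Nat.le_of_dvd (by omega) this
    omega
  have hq1 : (q : ZMod p) ≠ 1 := by
    intro h
    have h' : ((q : ℕ) : ZMod p) = ((1 : ℕ) : ZMod p) := by simpa using h
    have := natCast_inj_of_lt hqp (by omega) h'
    omega
  -- trichotomy of displacements
  obtain ⟨hF, hA, hB⟩ := hσ
  have hd : ∀ j : ZMod p, σ j = j ∨ σ j - j = 1 ∨ σ j - j = (q : ZMod p) := by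
    set F := Finset.univ.filter fun j : ZMod p => σ j = j with hFdef
    set A := Finset.univ.filter fun j : ZMod p => σ j - j = 1 with hAdef
    set B := Finset.univ.filter fun j : ZMod p => σ j - j = (q : ZMod p) with hBdef
    have hFA : Disjoint F A := by
      rw [Finset.disjoint_left]
      intro a haF haA
      rw [hFdef, Finset.mem_filter] at haF
      rw [hAdef, Finset.mem_filter] at haA
      apply h10
      rw [← haA.2, haF.2, sub_self]
    have hFB : Disjoint F B := by
      rw [Finset.disjoint_left]
      intro a haF haB
      rw [hFdef, Finset.mem_filter] at haF
      rw [hBdef, Finset.mem_filter] at haB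
      apply hq0
      rw [← haB.2, haF.2, sub_self]
    have hAB : Disjoint A B := by
      rw [Finset.disjoint_left]
      intro a haA haB
      rw [hAdef, Finset.mem_filter] at haA
      rw [hBdef, Finset.mem_filter] at haB
      apply hq1
      rw [← haB.2, haA.2]
    have hABcard : (A ∪ B).card = r + s := by
      rw [Finset.card_union_of_disjoint hAB, hA, hB]
    have hle : r + s ≤ p := by
      have h1 := Finset.card_le_univ (A ∪ B)
      rw [hABcard] at h1
      rw [ZMod.card] at h1
      exact h1
    have huniv : F ∪ (A ∪ B) = Finset.univ := by
      apply Finset.eq_univ_of_card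
      rw [Finset.card_union_of_disjoint (Finset.disjoint_union_right.mpr ⟨hFA, hFB⟩),
        hABcard, hF, ZMod.card]
      omega
    intro j
    have hj : j ∈ F ∪ (A ∪ B) := huniv ▸ Finset.mem_univ j
    simp only [Finset.mem_union, hFdef, hAdef, hBdef, Finset.mem_filter,
      Finset.mem_univ, true_and] at hj
    tauto
  -- basic cycle facts
  obtain ⟨hC₁c, hC₁2⟩ := Equiv.Perm.mem_cycleFactorsFinset_iff.mp hC₁
  obtain ⟨hC₂c, hC₂2⟩ := Equiv.Perm.mem_cycleFactorsFinset_iff.mp hC₂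
  have hdisj : Disjoint C₁.support C₂.support :=
    Equiv.Perm.Disjoint.disjoint_support
      (Equiv.Perm.cycleFactorsFinset_pairwise_disjoint σ (Finset.mem_coe.mpr hC₁)
        (Finset.mem_coe.mpr hC₂) hCeq)
  have hcards : C₁.support.card + C₂.support.card ≤ p := by
    have h1 := Finset.card_le_univ (C₁.support ∪ C₂.support)
    rw [Finset.card_union_of_disjoint hdisj] at h1
    rw [ZMod.card] at h1
    exact h1
  have hc1 : 2 ≤ C₁.support.card := hC₁c.two_le_card_support
  have hc2 : 2 ≤ C₂.support.card := hC₂c.two_le_card_support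
  -- rewrite the statement's filters in terms of σ
  have hrw1 : ∀ (C : Equiv.Perm (ZMod p)), (∀ a ∈ C.support, C a = σ a) →
      ∀ v : ZMod p, C.support.filter (fun j => C j - j = v) =
        C.support.filter (fun j => σ j - j = v) := by
    intro C hC2' v
    apply Finset.filter_congr
    intro j hj
    rw [hC2' j hj]
  rw [hrw1 C₁ hC₁2, hrw1 C₂ hC₂2, hrw1 C₁ hC₁2, hrw1 C₂ hC₂2]
  -- each cycle has a q-step
  have hbpos : ∀ (C : Equiv.Perm (ZMod p)), C ∈ σ.cycleFactorsFinset →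
      (∀ a ∈ C.support, C a = σ a) → 0 < C.support.card → C.support.card ≤ p - 2 →
      (C.support.filter fun j => σ j - j = (q : ZMod p)).Nonempty := by
    intro C hC hC2' hcard0 hcard
    rw [← Finset.card_pos]
    by_contra hb
    push_neg at hb
    have hb0 : (C.support.filter fun j => σ j - j = (q : ZMod p)).card = 0 := by omega
    have hcast := cycle_cast_sum hq hqp hq1 hq0 h10 hd hC
    rw [hb0] at hcast
    push_cast at hcast
    rw [zero_mul, add_zero] at hcast
    -- so all points of the support are 1-steps
    have hall : C.support.filter (fun j => σ j - j = 1) = C.support := by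
      apply Finset.filter_true_of_mem
      intro j hj
      rcases hd j with h | h | h
      · exfalso
        apply Equiv.Perm.mem_support.mp hj
        rw [hC2' j hj, h]
      · exact h
      · exfalso
        have : j ∈ C.support.filter fun j => σ j - j = (q : ZMod p) :=
          Finset.mem_filter.mpr ⟨hj, h⟩
        rw [Finset.card_eq_zero.mp hb0] at this
        exact absurd this (Finset.notMem_empty j)
    rw [hall] at hcast
    have := (ZMod.natCast_eq_zero_iff _ p).mp hcast
    have := Nat.le_of_dvd (by omega) this
    omega
  obtain ⟨z₁, hz₁⟩ := hbpos C₁ hC₁ hC₁2 (by omega) (by omega)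
  obtain ⟨z₂, hz₂⟩ := hbpos C₂ hC₂ hC₂2 (by omega) (by omega)
  rw [Finset.mem_filter] at hz₁ hz₂
  have hz₁q : σ z₁ = z₁ + (q : ZMod p) := by linear_combination hz₁.2
  have hz₂q : σ z₂ = z₂ + (q : ZMod p) := by linear_combination hz₂.2
  -- identify the q-step filters with same-cycle filters
  have hident : ∀ (C : Equiv.Perm (ZMod p)) (hC : C ∈ σ.cycleFactorsFinset)
      (z : ZMod p) (hzs : z ∈ C.support) (hzq : σ z = z + (q : ZMod p)),
      C.support.filter (fun j => σ j - j = (q : ZMod p)) =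
        (Bq σ q).filter (fun y => σ.SameCycle z y) := by
    intro C hC z hzs hzq
    have hcyc : C = σ.cycleOf z := Equiv.Perm.cycle_is_cycleOf hzs hC
    have hzσ : z ∈ σ.support := by
      rw [Equiv.Perm.mem_support, hzq]
      intro h
      exact hq0 (by linear_combination h)
    ext y
    rw [Finset.mem_filter, Finset.mem_filter, mem_Bq, hcyc,
      Equiv.Perm.mem_support_cycleOf_iff]
    constructor
    · rintro ⟨⟨hsc, -⟩, hyq⟩
      exact ⟨by linear_combination hyq, hsc⟩
    · rintro ⟨hyq, hsc⟩
      exact ⟨⟨hsc, hzσ⟩, by linear_combination hyq⟩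
  have hb : (C₁.support.filter fun j => σ j - j = (q : ZMod p)).card =
      (C₂.support.filter fun j => σ j - j = (q : ZMod p)).card := by
    rw [hident C₁ hC₁ z₁ hz₁.1 hz₁q, hident C₂ hC₂ z₂ hz₂.1 hz₂q]
    exact le_antisymm
      (card_le_card_sameCycle hq hqp hq1 hq0 h10 hd hz₁q hz₂q)
      (card_le_card_sameCycle hq hqp hq1 hq0 h10 hd hz₂q hz₁q)
  refine ⟨?_, hb⟩
  -- the 1-step counts
  have hcast1 := cycle_cast_sum hq hqp hq1 hq0 h10 hd hC₁
  have hcast2 := cycle_cast_sum hq hqp hq1 hq0 h10 hd hC₂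
  rw [hb] at hcast1
  have hceq : ((C₁.support.filter fun j => σ j - j = 1).card : ZMod p) =
      ((C₂.support.filter fun j => σ j - j = 1).card : ZMod p) := by
    linear_combination hcast1 - hcast2
  have ha1 : (C₁.support.filter fun j => σ j - j = 1).card < p :=
    lt_of_le_of_lt (le_trans (Finset.card_filter_le _ _) (by omega : C₁.support.card ≤ p - 2))
      (by omega)
  have ha2 : (C₂.support.filter fun j => σ j - j = 1).card < p :=
    lt_of_le_of_lt (le_trans (Finset.card_filter_le _ _) (by omega : C₂.support.card ≤ p - 2))
      (by omega)
  exact natCast_inj_of_lt ha1 ha2 hceq
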